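/- Fix α ≥ 2. For every s ∈ [−1,1], the quantity r_max(s) = sup{r ≥ 0 : (s,r) ∈ D_feas} is attained (i.e., (s, r_max(s)) ∈ D_feas) and satisfies the boundary equation α·c_d(s, r_max(s)) = r_max(s)². Moreover, r_max(0) > 0. -/

import Mathlib

open MeasureTheory ProbabilityTheory Filter Real
open scoped NNReal ENNReal Topology

noncomputable section

/-- The standard Gaussian measure `N(0,1)` on `ℝ`. -/
def stdGaussian : Measure ℝ := gaussianReal 0 1

instance : IsProbabilityMeasure stdGaussian :=
  inferInstanceAs (IsProbabilityMeasure (gaussianReal 0 1))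

/-- `c_d(s,r) = E[(min{|q| - |r g + s q|, 0})²]` for independent standard Gaussians `q, g`. -/
def cd (s r : ℝ) : ℝ :=
  ∫ p : ℝ × ℝ, (min (|p.1| - |r * p.2 + s * p.1|) 0) ^ 2
    ∂(stdGaussian.prod stdGaussian)

/-- The deterministic feasibility set `D_feas`. -/
def Dfeas (α : ℝ) : Set (ℝ × ℝ) := {p | 0 ≤ p.2 ∧ α * cd p.1 p.2 ≤ p.2 ^ 2}

/-- The maximum radius `r_max(s) = sup {r : (s,r) ∈ D_feas}`. -/
def rmax (α s : ℝ) : ℝ := sSup {r : ℝ | (s, r) ∈ Dfeas α}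

lemma gpdf_eq (x : ℝ) :
    gaussianPDFReal 0 1 x = (Real.sqrt (2*π))⁻¹ * rexp (-(1/2) * x^2) := by
  simp only [gaussianPDFReal, NNReal.coe_one, mul_one, sub_zero]
  congr 1
  ring_nf

lemma integral_stdGaussian (g : ℝ → ℝ) :
    ∫ x, g x ∂stdGaussian = ∫ x, gaussianPDFReal 0 1 x * g x := by
  rw [_root_.stdGaussian, gaussianReal_of_var_ne_zero 0 one_ne_zero, gaussianPDF_def]
  have h : (fun x => ENNReal.ofReal (gaussianPDFReal 0 1 x))
      = fun x => ((Real.toNNReal (gaussianPDFReal 0 1 x) : ℝ≥0) : ℝ≥0∞) := rfl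
  rw [h, integral_withDensity_eq_integral_smul
    ((measurable_gaussianPDFReal 0 1).real_toNNReal) g]
  congr 1; ext x
  simp [NNReal.smul_def, Real.coe_toNNReal _ (gaussianPDFReal_nonneg 0 1 x)]

lemma integrable_stdGaussian_iff (g : ℝ → ℝ) :
    Integrable g stdGaussian ↔ Integrable (fun x => gaussianPDFReal 0 1 x * g x) := by
  rw [_root_.stdGaussian, gaussianReal_of_var_ne_zero 0 one_ne_zero, gaussianPDF_def]
  have h : (fun x => ENNReal.ofReal (gaussianPDFReal 0 1 x))
      = fun x => ((Real.toNNReal (gaussianPDFReal 0 1 x) : ℝ≥0) : ℝ≥0∞) := rfl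
  rw [h, integrable_withDensity_iff_integrable_smul
    ((measurable_gaussianPDFReal 0 1).real_toNNReal)]
  constructor <;> intro hI <;> refine hI.congr (Eventually.of_forall fun x => ?_) <;>
    simp [NNReal.smul_def, Real.coe_toNNReal _ (gaussianPDFReal_nonneg 0 1 x)]

lemma rpow_two_eq (x : ℝ) : x ^ (2:ℝ) = x ^ 2 := by
  rw [show (2:ℝ) = ((2:ℕ):ℝ) by norm_num, Real.rpow_natCast]

lemma integrable_sq_exp : Integrable (fun x : ℝ => x^2 * rexp (-(1/2) * x^2)) := by
  have h := integrable_rpow_mul_exp_neg_mul_sq (b := 1/2) (by norm_num) (s := 2) (by norm_num)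
  refine h.congr (Eventually.of_forall fun x => ?_)
  simp [rpow_two_eq]

lemma integral_sq_exp : ∫ x : ℝ, x^2 * rexp (-(1/2) * x^2) = Real.sqrt (2*π) := by
  have hexp : Integrable (fun x : ℝ => rexp (-(1/2) * x^2)) :=
    integrable_exp_neg_mul_sq (by norm_num)
  have hderiv : ∀ x : ℝ, HasDerivAt (fun x : ℝ => -x * rexp (-(1/2) * x^2))
      ((x^2 - 1) * rexp (-(1/2) * x^2)) x := by
    intro x
    have h1 : HasDerivAt (fun x : ℝ => -(1/2) * x^2) (-x) x := by
      simpa using (hasDerivAt_pow 2 x).const_mul (-(1/2) : ℝ)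
    have h2 := h1.exp
    have h3 : HasDerivAt (fun x : ℝ => -x * rexp (-(1/2) * x^2))
        (-1 * rexp (-(1/2) * x^2) + -x * (rexp (-(1/2) * x^2) * -x)) x :=
      ((hasDerivAt_id x).neg).mul h2
    convert h3 using 1
    ring
  have hf' : Integrable (fun x : ℝ => (x^2 - 1) * rexp (-(1/2) * x^2)) := by
    refine (integrable_sq_exp.sub hexp).congr (Eventually.of_forall fun x => ?_)
    simp
    ring
  have hf : Integrable (fun x : ℝ => -x * rexp (-(1/2) * x^2)) := by
    have := (integrable_mul_exp_neg_mul_sq (b := 1/2) (by norm_num)).neg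
    refine this.congr (Eventually.of_forall fun x => ?_)
    simp
  have key := integral_eq_zero_of_hasDerivAt_of_integrable hderiv hf' hf
  have hsplit : ∫ x : ℝ, (x^2 - 1) * rexp (-(1/2) * x^2)
      = (∫ x : ℝ, x^2 * rexp (-(1/2) * x^2)) - ∫ x : ℝ, rexp (-(1/2) * x^2) := by
    rw [← integral_sub integrable_sq_exp hexp]
    congr 1; funext x; ring
  have hg : ∫ x : ℝ, rexp (-(1/2) * x^2) = Real.sqrt (2*π) := by
    have := integral_gaussian (1/2)
    rw [show π / (1/2) = 2 * π by ring] at this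
    exact this
  rw [hsplit, hg] at key
  linarith

lemma integral_sq_gaussian : ∫ x, x^2 ∂stdGaussian = 1 := by
  rw [integral_stdGaussian]
  have h : (fun x : ℝ => gaussianPDFReal 0 1 x * x^2)
      = fun x => (Real.sqrt (2*π))⁻¹ * (x^2 * rexp (-(1/2) * x^2)) := by
    funext x; rw [gpdf_eq]; ring
  rw [h, integral_const_mul, integral_sq_exp]
  rw [inv_mul_cancel₀]
  positivity

lemma integrable_sq_gaussian : Integrable (fun x : ℝ => x^2) stdGaussian := by
  rw [integrable_stdGaussian_iff]
  refine (integrable_sq_exp.const_mul ((Real.sqrt (2*π))⁻¹)).congr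
    (Eventually.of_forall fun x => ?_)
  simp only [gpdf_eq]; ring


lemma integrable_quad : Integrable (fun x : ℝ => (x^2+1)/2) stdGaussian := by
  have := (integrable_sq_gaussian.add (integrable_const 1)).div_const 2
  exact this.congr (Eventually.of_forall fun x => by simp)

lemma integral_quad : ∫ x, (x^2+1)/2 ∂stdGaussian = 1 := by
  rw [integral_div, integral_add integrable_sq_gaussian (integrable_const 1),
    integral_sq_gaussian, integral_const]
  simp

lemma abs_le_quad (x : ℝ) : |x| ≤ (x^2+1)/2 := by
  nlinarith [sq_nonneg (|x| - 1), sq_abs x]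

lemma integrable_abs_gaussian : Integrable (fun x : ℝ => |x|) stdGaussian := by
  refine Integrable.mono' integrable_quad
    (continuous_abs.aestronglyMeasurable) (Eventually.of_forall fun x => ?_)
  rw [Real.norm_eq_abs, abs_abs]
  exact abs_le_quad x

lemma integral_abs_gaussian_le : ∫ x, |x| ∂stdGaussian ≤ 1 := by
  have h := integral_mono integrable_abs_gaussian integrable_quad abs_le_quad
  rw [integral_quad] at h
  exact h

lemma integral_abs_gaussian_nonneg : 0 ≤ ∫ x, |x| ∂stdGaussian :=
  integral_nonneg fun x => abs_nonneg x

lemma integrable_fst_sq : Integrable (fun p : ℝ × ℝ => p.1^2) (stdGaussian.prod stdGaussian) := by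
  have := integrable_sq_gaussian.mul_prod (integrable_const (1:ℝ))
    (μ := stdGaussian) (ν := stdGaussian)
  simpa using this

lemma integrable_snd_sq : Integrable (fun p : ℝ × ℝ => p.2^2) (stdGaussian.prod stdGaussian) := by
  have := (integrable_const (1:ℝ)).mul_prod integrable_sq_gaussian
    (μ := stdGaussian) (ν := stdGaussian)
  simpa using this

lemma integrable_abs_mul :
    Integrable (fun p : ℝ × ℝ => |p.1| * |p.2|) (stdGaussian.prod stdGaussian) :=
  integrable_abs_gaussian.mul_prod integrable_abs_gaussian

lemma integral_snd_sq : ∫ p : ℝ × ℝ, p.2^2 ∂(stdGaussian.prod stdGaussian) = 1 := by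
  have h := integral_prod_mul (μ := stdGaussian) (ν := stdGaussian)
    (fun _ : ℝ => (1:ℝ)) (fun y => y^2)
  simp only [one_mul] at h
  rw [h, integral_sq_gaussian]
  simp

lemma integral_abs_mul : ∫ p : ℝ × ℝ, |p.1| * |p.2| ∂(stdGaussian.prod stdGaussian)
    = (∫ x, |x| ∂stdGaussian)^2 := by
  have h := integral_prod_mul (μ := stdGaussian) (ν := stdGaussian)
    (fun x : ℝ => |x|) (fun y : ℝ => |y|)
  rw [h]
  ring

lemma min_sq_le (x y : ℝ) : (min (|x| - |y|) 0)^2 ≤ y^2 := by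
  rcases le_or_gt (|x| - |y|) 0 with h | h
  · rw [min_eq_left h]
    nlinarith [abs_nonneg x, abs_nonneg y, sq_abs x, sq_abs y, mul_nonneg (abs_nonneg x) (abs_nonneg y)]
  · rw [min_eq_right h.le]
    simpa using sq_nonneg y

lemma min_sq_ge (a x : ℝ) (h : a ≤ |x|) : a^2 - x^2 ≤ (min a 0)^2 := by
  rcases le_or_gt a 0 with h' | h'
  · rw [min_eq_left h']
    nlinarith [sq_nonneg x]
  · rw [min_eq_right h'.le]
    nlinarith [sq_abs x, abs_nonneg x]

lemma cd_integrand_continuous (s r : ℝ) :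
    Continuous (fun p : ℝ × ℝ => (min (|p.1| - |r * p.2 + s * p.1|) 0) ^ 2) := by
  fun_prop

lemma cd_integrand_le (s r : ℝ) (p : ℝ × ℝ) :
    (min (|p.1| - |r * p.2 + s * p.1|) 0) ^ 2 ≤ 2*r^2*p.2^2 + 2*s^2*p.1^2 := by
  have h := min_sq_le p.1 (r * p.2 + s * p.1)
  nlinarith [sq_nonneg (r * p.2 - s * p.1)]

lemma integrable_quad2 (a b : ℝ) :
    Integrable (fun p : ℝ × ℝ => a * p.2^2 + b * p.1^2) (stdGaussian.prod stdGaussian) :=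
  (integrable_snd_sq.const_mul a).add (integrable_fst_sq.const_mul b)

lemma cd_integrable (s r : ℝ) :
    Integrable (fun p : ℝ × ℝ => (min (|p.1| - |r * p.2 + s * p.1|) 0) ^ 2)
      (stdGaussian.prod stdGaussian) := by
  refine Integrable.mono' (integrable_quad2 (2*r^2) (2*s^2))
    (cd_integrand_continuous s r).aestronglyMeasurable (Eventually.of_forall fun p => ?_)
  rw [Real.norm_eq_abs, abs_of_nonneg (by positivity)]
  have := cd_integrand_le s r p
  linarith

lemma cd_nonneg (s r : ℝ) : 0 ≤ cd s r :=
  integral_nonneg fun p => sq_nonneg _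

lemma cd_zero (s : ℝ) (hs : |s| ≤ 1) : cd s 0 = 0 := by
  rw [cd]
  rw [show (fun p : ℝ × ℝ => (min (|p.1| - |0 * p.2 + s * p.1|) 0) ^ 2) = fun _ => (0:ℝ) by
    funext p
    rw [zero_mul, zero_add, abs_mul, min_eq_right (by nlinarith [abs_nonneg p.1]), zero_pow two_ne_zero]]
  simp

lemma cd_continuous (s : ℝ) : Continuous (fun r => cd s r) := by
  rw [continuous_iff_continuousAt]
  intro r0
  refine continuousAt_of_dominated (F := fun r (p : ℝ × ℝ) => (min (|p.1| - |r * p.2 + s * p.1|) 0) ^ 2)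
    (bound := fun p : ℝ × ℝ => 2*(|r0|+1)^2*p.2^2 + 2*s^2*p.1^2)
    (Eventually.of_forall fun r => (cd_integrand_continuous s r).aestronglyMeasurable) ?_
    (integrable_quad2 (2*(|r0|+1)^2) (2*s^2)) ?_
  · filter_upwards [Metric.ball_mem_nhds r0 one_pos] with r hr
    refine Eventually.of_forall fun p => ?_
    rw [Real.norm_eq_abs, abs_of_nonneg (by positivity)]
    have h1 := cd_integrand_le s r p
    have h2 : |r| ≤ |r0| + 1 := by
      have := abs_sub_abs_le_abs_sub r r0
      have hd : |r - r0| < 1 := by simpa [Real.dist_eq] using hr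
      linarith
    have h3 : r^2 ≤ (|r0|+1)^2 := by
      have := mul_self_le_mul_self (abs_nonneg r) h2
      nlinarith [sq_abs r]
    nlinarith [sq_nonneg p.2]
  · refine Eventually.of_forall fun p => ?_
    have : Continuous (fun r : ℝ => (min (|p.1| - |r * p.2 + s * p.1|) 0) ^ 2) := by fun_prop
    exact this.continuousAt

lemma cd_lower {r : ℝ} (hr : 0 ≤ r) : r^2 - 2*r ≤ cd 0 r := by
  have hint : Integrable (fun p : ℝ × ℝ => r^2 * p.2^2 - 2*r*(|p.1| * |p.2|))
      (stdGaussian.prod stdGaussian) :=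
    (integrable_snd_sq.const_mul (r^2)).sub (integrable_abs_mul.const_mul (2*r))
  have hmono : ∀ p : ℝ × ℝ, r^2 * p.2^2 - 2*r*(|p.1| * |p.2|)
      ≤ (min (|p.1| - |r * p.2 + 0 * p.1|) 0) ^ 2 := by
    intro p
    have habs : |r * p.2 + 0 * p.1| = r * |p.2| := by
      rw [zero_mul, add_zero, abs_mul, abs_of_nonneg hr]
    rw [habs]
    have h := min_sq_ge (|p.1| - r * |p.2|) p.1
      (by nlinarith [abs_nonneg p.2, le_abs_self p.1, abs_nonneg p.1])
    have hsq : (|p.1| - r * |p.2|)^2 - p.1^2 = r^2 * p.2^2 - 2*r*(|p.1| * |p.2|) + 2*(|p.1|^2 - p.1^2)/2 := by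
      have e1 : |p.1|^2 = p.1^2 := sq_abs p.1
      have e2 : |p.2|^2 = p.2^2 := sq_abs p.2
      nlinarith [e1, e2]
    nlinarith [h, sq_abs p.1, sq_abs p.2]
  have h := integral_mono hint (cd_integrable 0 r) hmono
  rw [integral_sub (integrable_snd_sq.const_mul (r^2)) (integrable_abs_mul.const_mul (2*r)),
    integral_const_mul, integral_const_mul, integral_snd_sq, integral_abs_mul] at h
  have hI := integral_abs_gaussian_le
  have hI0 := integral_abs_gaussian_nonneg
  have hI2 : (∫ x, |x| ∂stdGaussian)^2 ≤ 1 := by nlinarith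
  have : r^2 - 2*r ≤ r^2 * 1 - 2*r*(∫ x, |x| ∂stdGaussian)^2 := by nlinarith
  rw [cd]
  exact le_trans this h

lemma stdGaussian_singleton : stdGaussian {(0:ℝ)} = 0 :=
  gaussianReal_absolutelyContinuous 0 one_ne_zero (by simp)

lemma ae_fst_ne_zero : ∀ᵐ p : ℝ × ℝ ∂(stdGaussian.prod stdGaussian), p.1 ≠ 0 := by
  rw [ae_iff]
  have hset : {p : ℝ × ℝ | ¬ p.1 ≠ 0} = ({(0:ℝ)} : Set ℝ) ×ˢ (Set.univ : Set ℝ) := by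
    ext p
    simp only [Set.mem_setOf_eq, not_not, Set.mem_prod, Set.mem_singleton_iff, Set.mem_univ,
      and_true]
  rw [hset, Measure.prod_prod, stdGaussian_singleton]
  simp

def G (m : ℕ) : ℝ :=
  ∫ p : ℝ × ℝ, (min ((m:ℝ) * |p.1| - |p.2|) 0) ^ 2 ∂(stdGaussian.prod stdGaussian)

lemma G_le (m : ℕ) (p : ℝ × ℝ) : (min ((m:ℝ) * |p.1| - |p.2|) 0) ^ 2 ≤ p.2^2 := by
  have h : (m:ℝ) * |p.1| = |(m:ℝ) * p.1| := by
    rw [abs_mul, Nat.abs_cast]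
  rw [h]
  exact min_sq_le ((m:ℝ) * p.1) p.2

lemma G_tendsto : Tendsto G atTop (𝓝 0) := by
  have key : Tendsto (fun m : ℕ => ∫ p : ℝ × ℝ, (min ((m:ℝ) * |p.1| - |p.2|) 0) ^ 2
      ∂(stdGaussian.prod stdGaussian)) atTop
      (𝓝 (∫ p : ℝ × ℝ, (0:ℝ) ∂(stdGaussian.prod stdGaussian))) := by
    refine tendsto_integral_of_dominated_convergence (fun p : ℝ × ℝ => p.2^2)
      (fun m => ?_) integrable_snd_sq (fun m => ?_) ?_
    · exact (by fun_prop : Continuous (fun p : ℝ × ℝ => (min ((m:ℝ) * |p.1| - |p.2|) 0) ^ 2)).aestronglyMeasurable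
    · refine Eventually.of_forall fun p => ?_
      rw [Real.norm_eq_abs, abs_of_nonneg (sq_nonneg _)]
      exact G_le m p
    · filter_upwards [ae_fst_ne_zero] with p hp
      have hp1 : 0 < |p.1| := abs_pos.mpr hp
      obtain ⟨N, hN⟩ := exists_nat_ge (|p.2| / |p.1|)
      refine Tendsto.congr' ?_ tendsto_const_nhds
      rw [Filter.EventuallyEq, eventually_atTop]
      refine ⟨N, fun n hn => ?_⟩
      have h1 : |p.2| ≤ (n:ℝ) * |p.1| := by
        rw [div_le_iff₀ hp1] at hN
        have : (N:ℝ) ≤ (n:ℝ) := Nat.cast_le.mpr hn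
        nlinarith
      rw [min_eq_right (by linarith), zero_pow two_ne_zero]
  rw [integral_zero] at key
  exact key

lemma min_const_mul (c b : ℝ) (hc : 0 ≤ c) : min (c * b) 0 = c * min b 0 := by
  rcases le_total b 0 with h | h
  · rw [min_eq_left (by nlinarith), min_eq_left h]
  · rw [min_eq_right (by positivity), min_eq_right h, mul_zero]

lemma cd_scaling (m : ℕ) (hm : 1 ≤ m) : cd 0 ((m:ℝ)⁻¹) = ((m:ℝ)⁻¹)^2 * G m := by
  have hm0 : (0:ℝ) < (m:ℝ) := by exact_mod_cast hm
  rw [cd, G, ← integral_const_mul]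
  congr 1
  funext p
  have h1 : |(m:ℝ)⁻¹ * p.2 + 0 * p.1| = (m:ℝ)⁻¹ * |p.2| := by
    rw [zero_mul, add_zero, abs_mul, abs_inv, Nat.abs_cast]
  rw [h1]
  have h2 : |p.1| - (m:ℝ)⁻¹ * |p.2| = (m:ℝ)⁻¹ * ((m:ℝ) * |p.1| - |p.2|) := by
    field_simp
  rw [h2, min_const_mul _ _ (by positivity)]
  ring

lemma exists_small_feasible {α : ℝ} (hα : 0 < α) : ∃ r : ℝ, 0 < r ∧ α * cd 0 r ≤ r^2 := by
  have hev : ∀ᶠ n : ℕ in atTop, G n < 1/α :=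
    G_tendsto.eventually (gt_mem_nhds (by positivity))
  obtain ⟨n, hn1, hn2⟩ := (hev.and (eventually_ge_atTop 1)).exists
  have hn0 : (0:ℝ) < (n:ℝ) := by exact_mod_cast hn2
  refine ⟨(n:ℝ)⁻¹, inv_pos.mpr hn0, ?_⟩
  rw [cd_scaling n hn2]
  have hGn : 0 ≤ G n := integral_nonneg fun p => sq_nonneg _
  have : α * G n ≤ 1 := by
    rw [lt_div_iff₀ hα] at hn1
    nlinarith
  have hpos : 0 < ((n:ℝ)⁻¹)^2 := by positivity
  nlinarith

/-- **Lemma (P.3).** For `α ≥ 2` and every `s ∈ [-1,1]`, the supremum `r_max(s)` is attained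
and satisfies `α·c_d(s, r_max(s)) = r_max(s)²`; moreover `r_max(0) > 0`. -/
theorem stmt3 (α : ℝ) (hα : 2 ≤ α) :
    (∀ s ∈ Set.Icc (-1 : ℝ) 1,
      (s, rmax α s) ∈ Dfeas α ∧ α * cd s (rmax α s) = rmax α s ^ 2) ∧
    0 < rmax α 0 := by
  have hα0 : (0:ℝ) < α := by linarith
  have main : ∀ s : ℝ, |s| ≤ 1 →
      (s, rmax α s) ∈ Dfeas α ∧ α * cd s (rmax α s) = rmax α s ^ 2 := by
    intro s hs
    set S : Set ℝ := {r : ℝ | (s, r) ∈ Dfeas α} with hSdef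
    have hmemS : ∀ r : ℝ, r ∈ S ↔ (0 ≤ r ∧ α * cd s r ≤ r^2) := fun r => Iff.rfl
    have h0S : (0:ℝ) ∈ S := by
      rw [hmemS]
      refine ⟨le_rfl, ?_⟩
      rw [cd_zero s hs]
      norm_num
    have hrmax : rmax α s = sSup S := rfl
    have hclosed : IsClosed S := by
      have hSeq : S = {r : ℝ | 0 ≤ r} ∩ {r : ℝ | α * cd s r ≤ r^2} := rfl
      rw [hSeq]
      exact (isClosed_le continuous_const continuous_id).inter
        (isClosed_le (continuous_const.mul (cd_continuous s)) (continuous_pow 2))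
    by_cases hb : BddAbove S
    · have hmem2 : sSup S ∈ S := hclosed.csSup_mem ⟨0, h0S⟩ hb
      rw [hmemS] at hmem2
      refine ⟨hmem2, ?_⟩
      by_contra hne
      have hlt : α * cd s (sSup S) < (sSup S)^2 := lt_of_le_of_ne hmem2.2 (by
        rw [hrmax] at hne; exact hne)
      have hg : Continuous (fun r : ℝ => r^2 - α * cd s r) :=
        (continuous_pow 2).sub (continuous_const.mul (cd_continuous s))
      have hopen : IsOpen {r : ℝ | 0 < r^2 - α * cd s r} := isOpen_lt continuous_const hg
      have hR : sSup S ∈ {r : ℝ | 0 < r^2 - α * cd s r} := by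
        simp only [Set.mem_setOf_eq]
        linarith
      obtain ⟨ε, hε, hball⟩ := Metric.isOpen_iff.mp hopen _ hR
      have hr' : sSup S + ε/2 ∈ S := by
        rw [hmemS]
        refine ⟨by linarith [hmem2.1], ?_⟩
        have hmemball : sSup S + ε/2 ∈ Metric.ball (sSup S) ε := by
          rw [Metric.mem_ball, Real.dist_eq]
          rw [abs_of_nonneg (by linarith)]
          linarith
        have := hball hmemball
        simp only [Set.mem_setOf_eq] at this
        linarith
      have hle := le_csSup hb hr'
      linarith
    · have hsup : sSup S = 0 := Real.sSup_of_not_bddAbove hb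
      have hrm : rmax α s = 0 := by rw [hrmax, hsup]
      rw [hrm]
      refine ⟨?_, ?_⟩
      · show (0:ℝ) ≤ 0 ∧ α * cd s 0 ≤ (0:ℝ)^2
        rw [cd_zero s hs]
        norm_num
      · rw [cd_zero s hs]
        norm_num
  refine ⟨fun s hs => main s (abs_le.mpr ⟨hs.1, hs.2⟩), ?_⟩
  obtain ⟨r₀, hr₀, hfeas⟩ := exists_small_feasible hα0
  have hS0 : r₀ ∈ {r : ℝ | ((0:ℝ), r) ∈ Dfeas α} := ⟨hr₀.le, hfeas⟩
  have hbdd : BddAbove {r : ℝ | ((0:ℝ), r) ∈ Dfeas α} := by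
    refine ⟨4, fun r hr => ?_⟩
    obtain ⟨h1, h2⟩ := hr
    have h3 := cd_lower h1
    by_contra h4
    push_neg at h4
    have h5 : α * (r^2 - 2*r) ≤ α * cd 0 r := mul_le_mul_of_nonneg_left h3 hα0.le
    nlinarith [mul_nonneg (by linarith : (0:ℝ) ≤ α - 2) (by nlinarith : (0:ℝ) ≤ r^2 - 2*r)]
  have hle := le_csSup hbdd hS0
  calc (0:ℝ) < r₀ := hr₀
    _ ≤ rmax α 0 := hle
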